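/- The dual of a tiered tree with two tiers is again a tree: if F is a tiered forest with two tiers, then F is acyclic and connected if and only if its dual F' is acyclic and connected. More generally, F and F' have the same number of connected components. -/

import Mathlib

open Finset

attribute [local instance 10] Classical.propDecidable

noncomputable section

/-- An edge of a simple graph on `ℕ`, stored as an ordered pair `(u,v)` with `u < v` intended. -/
abbrev PEdge : Type := ℕ × ℕ

/-- A labelled edge (for multigraphs): an endpoint pair together with a label. -/
abbrev LEdge : Type := (ℕ × ℕ) × ℕ

def adjP (E : Finset PEdge) (u v : ℕ) : Prop := (u, v) ∈ E ∨ (v, u) ∈ E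

def reachP (E : Finset PEdge) : ℕ → ℕ → Prop := Relation.ReflTransGen (adjP E)

def connP (V : Finset ℕ) (E : Finset PEdge) : Prop :=
  (∀ e ∈ E, e.1 ∈ V ∧ e.2 ∈ V) ∧ ∀ u ∈ V, ∀ v ∈ V, reachP E u v

def IsTreeOn (V : Finset ℕ) (E : Finset PEdge) : Prop := connP V E ∧ E.card + 1 = V.card

/-- A graph on a finite set of naturals together with a tiering map. -/
structure PreGraph where
  V : Finset ℕ
  E : Finset PEdge
  t : ℕ → ℕ

/-- `G` is a tiered graph with two tiers. -/
def IsTiered (G : PreGraph) : Prop :=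
  (∀ v ∈ G.V, 0 < v) ∧
  (∀ e ∈ G.E, e.1 ∈ G.V ∧ e.2 ∈ G.V ∧ e.1 < e.2) ∧
  (∀ v ∈ G.V, G.t v = 1 ∨ G.t v = 2) ∧
  (∀ e ∈ G.E, G.t e.1 < G.t e.2)

/-- acyclicity: every edge is a bridge. -/
def IsForest (G : PreGraph) : Prop := ∀ e ∈ G.E, ¬ reachP (G.E.erase e) e.1 e.2

def IsTreeG (G : PreGraph) : Prop := IsTreeOn G.V G.E

/-- the connected component (vertex set) of `x`. -/
def comp (V : Finset ℕ) (E : Finset PEdge) (x : ℕ) : Finset ℕ :=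
  V.filter fun y => reachP E x y

/-- the order-reversing involution `x_i ↦ x_{s+1-i}` of a finite set `V = {x_1 < ... < x_s}`. -/
def flipMap (V : Finset ℕ) (x : ℕ) : ℕ :=
  if hx : x ∈ V then
    ((V.orderIsoOfFin rfl)
      ⟨V.card - 1 - ((V.orderIsoOfFin rfl).symm ⟨x, hx⟩).1, by
        have h := ((V.orderIsoOfFin rfl).symm ⟨x, hx⟩).isLt; omega⟩).1
  else x

/-- the dual of a (connected) tiered graph, via the global vertex ordering. -/
def dual (G : PreGraph) : PreGraph where
  V := G.V
  E := G.E.image fun e => (flipMap G.V e.2, flipMap G.V e.1)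
  t := fun x => if x ∈ G.V then 3 - G.t (flipMap G.V x) else G.t x

/-- the componentwise dual of a (possibly disconnected) tiered graph. -/
def cdual (G : PreGraph) : PreGraph where
  V := G.V
  E := G.E.image fun e => (flipMap (comp G.V G.E e.1) e.2, flipMap (comp G.V G.E e.1) e.1)
  t := fun x => if x ∈ G.V then 3 - G.t (flipMap (comp G.V G.E x) x) else G.t x

/-- the recursive weight of a tiered tree (fuel-based implementation; the recursion
depth is bounded by the number of vertices). -/
def weightAux : ℕ → PreGraph → ℕ
  | 0, _ => 0
  | fuel + 1, T =>
    if h : 2 ≤ T.V.card then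
      let v := T.V.min' (Finset.card_pos.mp (by omega))
      let V' := T.V.erase v
      let E' := T.E.filter fun e => e.1 ≠ v ∧ e.2 ≠ v
      ∑ u ∈ V'.filter (fun u => adjP T.E v u),
        (((comp V' E' u).filter fun y => y < u ∧ T.t v < T.t y).card
          + weightAux fuel ⟨comp V' E' u, E'.filter fun e => e.1 ∈ comp V' E' u, T.t⟩)
    else 0

def weight (T : PreGraph) : ℕ := weightAux T.V.card T

/-- edges of a complete tiered graph with tier 1 vertex set `A` and tier 2 vertex set `B`. -/
def ctE2 (A B : Finset ℕ) : Finset PEdge := (A ×ˢ B).filter fun e => e.1 < e.2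

/-- the edge set of the complete tiered graph determined by a two-tier tiered graph `G`. -/
def ctE (G : PreGraph) : Finset PEdge :=
  ctE2 (G.V.filter fun v => G.t v = 1) (G.V.filter fun v => G.t v = 2)

/-- edge set of the complete tiered graph on `[n]` determined by a tiering map `t`. -/
def ctEM (n : ℕ) (t : ℕ → ℕ) : Finset PEdge :=
  (Finset.Icc 1 n ×ˢ Finset.Icc 1 n).filter fun e => e.1 < e.2 ∧ t e.1 < t e.2

def extActiveP (T : Finset PEdge) (ω : PEdge → ℝ) (e : PEdge) : Prop :=
  e ∉ T ∧ reachP T e.1 e.2 ∧ ∀ e' ∈ T, ¬ reachP (T.erase e') e.1 e.2 → ω e < ω e'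

/-- external activity of the spanning forest `T` in the graph with edge set `E`. -/
def eaP (E T : Finset PEdge) (ω : PEdge → ℝ) : ℕ := (E.filter (extActiveP T ω)).card

def adjL (E : Finset LEdge) (u v : ℕ) : Prop := ∃ e ∈ E, e.1 = (u, v) ∨ e.1 = (v, u)
def reachL (E : Finset LEdge) : ℕ → ℕ → Prop := Relation.ReflTransGen (adjL E)
def connL (V : Finset ℕ) (E : Finset LEdge) : Prop := ∀ u ∈ V, ∀ v ∈ V, reachL E u v
def IsLTree (V : Finset ℕ) (T : Finset LEdge) : Prop := connL V T ∧ T.card + 1 = V.card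

def extActiveL (T : Finset LEdge) (ω : LEdge → ℝ) (e : LEdge) : Prop :=
  e ∉ T ∧ reachL T e.1.1 e.1.2 ∧ ∀ e' ∈ T, ¬ reachL (T.erase e') e.1.1 e.1.2 → ω e < ω e'

def eaL (E T : Finset LEdge) (ω : LEdge → ℝ) : ℕ := (E.filter (extActiveL T ω)).card

def omega1 (N : ℕ) (e : PEdge) : ℝ := (e.1 : ℝ) + (e.2 : ℝ) / (N : ℝ)
def omega2 (N : ℕ) (e : PEdge) : ℝ := ((N + 1 - e.2 : ℕ) : ℝ) + ((N + 1 - e.1 : ℕ) : ℝ) / (N : ℝ)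
def omegaLex (n : ℕ) (e : PEdge) : ℝ := ((e.1 * (n + 1) + e.2 : ℕ) : ℝ)

/-- representative (minimum) of the component of `x` in the forest `F` on vertex set `V`. -/
def rep (V : Finset ℕ) (F : Finset LEdge) (x : ℕ) : ℕ :=
  if hx : x ∈ V then
    (V.filter fun y => reachL F x y).min'
      ⟨x, Finset.mem_filter.mpr ⟨hx, Relation.ReflTransGen.refl⟩⟩
  else x

/-- image of an edge in the quotient graph `G • F`; the label encodes the original edge. -/
def quotEdge (ρ : ℕ → ℕ) (e : LEdge) : LEdge :=
  ((ρ e.1.1, ρ e.1.2), Nat.pair (Nat.pair e.1.1 e.1.2) e.2)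

/-- recover the original edge from a quotient edge. -/
def decodeE (e : LEdge) : LEdge :=
  (((Nat.unpair (Nat.unpair e.2).1).1, (Nat.unpair (Nat.unpair e.2).1).2), (Nat.unpair e.2).2)

/-- tiering map on `[n]` induced by `f : Fin n → Fin m` (tiers `1,...,m`). -/
def tf (n m : ℕ) (f : Fin n → Fin m) : ℕ → ℕ := fun v =>
  if h : v ∈ Finset.Icc 1 n then
    (f ⟨v - 1, by have := Finset.mem_Icc.mp h; omega⟩).1 + 1
  else 0

/-- `G` is a tiered graph with `m` tiers. -/
def IsTieredM (m : ℕ) (G : PreGraph) : Prop :=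
  (∀ e ∈ G.E, e.1 ∈ G.V ∧ e.2 ∈ G.V ∧ e.1 < e.2) ∧
  (∀ v ∈ G.V, G.t v ∈ Finset.Icc 1 m) ∧
  (∀ e ∈ G.E, G.t e.1 < G.t e.2) ∧
  (∀ i ∈ Finset.Icc 1 m, ∃ v ∈ G.V, G.t v = i)

/-- weight polynomial `P_p(q)` (recursive weight), evaluated at `q`. -/
def Pw (n m : ℕ) (p : ℕ → ℕ) (q : ℤ) : ℤ :=
  ∑ f : Fin n → Fin m,
    ∑ E ∈ ((Finset.Icc 1 n ×ˢ Finset.Icc 1 n).powerset.filter fun E =>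
        IsTreeG ⟨Finset.Icc 1 n, E, tf n m f⟩ ∧ IsTieredM m ⟨Finset.Icc 1 n, E, tf n m f⟩ ∧
        ∀ i ∈ Finset.Icc 1 m, ((Finset.Icc 1 n).filter fun v => tf n m f v = i).card = p i),
      q ^ weight ⟨Finset.Icc 1 n, E, tf n m f⟩

/-- weight polynomial `P_p(q)` with the weight of a tiered tree given by its external
activity in the complete tiered graph it determines (lexicographic edge order). -/
def PwEA (n m : ℕ) (p : ℕ → ℕ) (q : ℤ) : ℤ :=
  ∑ f : Fin n → Fin m,
    ∑ E ∈ ((Finset.Icc 1 n ×ˢ Finset.Icc 1 n).powerset.filter fun E =>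
        IsTreeG ⟨Finset.Icc 1 n, E, tf n m f⟩ ∧ IsTieredM m ⟨Finset.Icc 1 n, E, tf n m f⟩ ∧
        ∀ i ∈ Finset.Icc 1 m, ((Finset.Icc 1 n).filter fun v => tf n m f v = i).card = p i),
      q ^ eaP (ctEM n (tf n m f)) E (omegaLex n)

/-- `T^c_G(y)`: the Tutte evaluation `T_G(1,y)` (spanning tree expansion) for a connected
graph, `0` otherwise. -/
def TcP (V : Finset ℕ) (E : Finset PEdge) (ω : PEdge → ℝ) (y : ℤ) : ℤ :=
  if connP V E then ∑ T ∈ E.powerset.filter (fun T => IsTreeOn V T), y ^ eaP E T ω else 0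

/-- edge multiset of `H ∪ Q_S`: `H`-edges (labels `≠ 0`) together with the complete
tiered graph on `U` with tier-1 set `S` (labelled `0`). -/
def qE (U : Finset ℕ) (EH : Finset LEdge) (S : Finset ℕ) : Finset LEdge :=
  EH ∪ (ctE2 S (U \ S)).image fun p => (p, 0)

/-- `(S,T) ↦ (S*, T*)`: the dual quasi-tiered tree. -/
def dualTree (U : Finset ℕ) (ST : Finset ℕ × Finset LEdge) : Finset ℕ × Finset LEdge :=
  (U.filter fun v =>
      (cdual ⟨U, (ST.2.filter fun e => e.2 = 0).image Prod.fst,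
        fun w => if w ∈ ST.1 then 1 else 2⟩).t v = 1,
   (ST.2.filter fun e => e.2 ≠ 0) ∪
     (cdual ⟨U, (ST.2.filter fun e => e.2 = 0).image Prod.fst,
        fun w => if w ∈ ST.1 then 1 else 2⟩).E.image fun p => (p, 0))

/-- tiered forests on `U` with tier sizes `(p1, p2)` (tier map normalised off `U`). -/
def ForestSet (U : Finset ℕ) (p1 p2 : ℕ) : Set PreGraph :=
  {F | F.V = U ∧ IsTiered F ∧ IsForest F ∧
    (U.filter fun v => F.t v = 1).card = p1 ∧
    (U.filter fun v => F.t v = 2).card = p2 ∧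
    ∀ v, v ∉ U → F.t v = 0}

section Stmt6Aux

lemma flip_mem {S : Finset ℕ} {x : ℕ} (hx : x ∈ S) : flipMap S x ∈ S := by
  rw [flipMap, dif_pos hx]; exact Finset.coe_mem _

lemma flip_not_mem {S : Finset ℕ} {x : ℕ} (hx : x ∉ S) : flipMap S x = x := by
  rw [flipMap, dif_neg hx]

lemma flip_flip' {S : Finset ℕ} {x : ℕ} (hx : x ∈ S) : flipMap S (flipMap S x) = x := by
  set iso := S.orderIsoOfFin rfl with hiso
  set i := (iso.symm ⟨x, hx⟩).1 with hi
  have hilt : i < S.card := (iso.symm ⟨x, hx⟩).isLt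
  have h1 : flipMap S x ∈ S := flip_mem hx
  have e1 : flipMap S x = (iso ⟨S.card - 1 - i, by omega⟩ : ℕ) := by
    rw [flipMap, dif_pos hx]
  rw [flipMap, dif_pos h1]
  have e2 : (⟨flipMap S x, h1⟩ : {y // y ∈ S}) = iso ⟨S.card - 1 - i, by omega⟩ :=
    Subtype.ext e1
  have hval : ((iso).symm ⟨flipMap S x, h1⟩).1 = S.card - 1 - i := by
    rw [e2, OrderIso.symm_apply_apply]
  have key : ∀ (j : Fin S.card), j = iso.symm ⟨x, hx⟩ → (iso j : ℕ) = x := by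
    intro j hj; rw [hj, OrderIso.apply_symm_apply]
  apply key
  apply Fin.ext
  show S.card - 1 - ((iso).symm ⟨flipMap S x, h1⟩).1 = (iso.symm ⟨x, hx⟩).1
  rw [hval, ← hi]; omega

lemma reachP_symm {E : Finset PEdge} {u v : ℕ} (h : reachP E u v) : reachP E v u :=
  by
    induction h with
    | refl => exact Relation.ReflTransGen.refl
    | tail _ hab ih => exact Relation.ReflTransGen.head (Or.symm hab) ih

lemma comp_congr {V : Finset ℕ} {E : Finset PEdge} {x y : ℕ} (h : reachP E x y) :
    comp V E x = comp V E y := by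
  unfold comp
  apply Finset.filter_congr
  intro z _
  exact ⟨fun hz => (reachP_symm h).trans hz, fun hz => h.trans hz⟩

/-- the global involution used to define `cdual`. -/
def gmap (V : Finset ℕ) (E : Finset PEdge) (x : ℕ) : ℕ := flipMap (comp V E x) x

/-- the corresponding edge involution. -/
def phiE (V : Finset ℕ) (E : Finset PEdge) (e : PEdge) : PEdge :=
  (gmap V E e.2, gmap V E e.1)

lemma gmap_not_mem {V : Finset ℕ} {E : Finset PEdge} {x : ℕ} (hx : x ∉ V) :
    gmap V E x = x :=
  flip_not_mem (fun hc => hx (Finset.mem_filter.mp hc).1)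

lemma mem_comp_self {V : Finset ℕ} {E : Finset PEdge} {x : ℕ} (hx : x ∈ V) :
    x ∈ comp V E x :=
  Finset.mem_filter.mpr ⟨hx, Relation.ReflTransGen.refl⟩

lemma gmap_mem_comp {V : Finset ℕ} {E : Finset PEdge} {x : ℕ} (hx : x ∈ V) :
    gmap V E x ∈ comp V E x :=
  flip_mem (mem_comp_self hx)

lemma reach_gmap {V : Finset ℕ} {E : Finset PEdge} {x : ℕ} (hx : x ∈ V) :
    reachP E x (gmap V E x) :=
  (Finset.mem_filter.mp (gmap_mem_comp hx)).2

lemma gmap_mem {V : Finset ℕ} {E : Finset PEdge} {x : ℕ} (hx : x ∈ V) :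
    gmap V E x ∈ V :=
  (Finset.mem_filter.mp (gmap_mem_comp hx)).1

lemma comp_gmap (V : Finset ℕ) (E : Finset PEdge) (x : ℕ) :
    comp V E (gmap V E x) = comp V E x := by
  by_cases hx : x ∈ V
  · exact comp_congr (reachP_symm (reach_gmap hx))
  · rw [gmap_not_mem hx]

lemma gmap_invol (V : Finset ℕ) (E : Finset PEdge) (x : ℕ) :
    gmap V E (gmap V E x) = x := by
  by_cases hx : x ∈ V
  · show flipMap (comp V E (gmap V E x)) (gmap V E x) = x
    rw [comp_gmap]
    exact flip_flip' (mem_comp_self hx)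
  · rw [gmap_not_mem hx, gmap_not_mem hx]

lemma phiE_invol (V : Finset ℕ) (E : Finset PEdge) : Function.Involutive (phiE V E) := by
  intro e
  show (gmap V E (gmap V E e.1), gmap V E (gmap V E e.2)) = e
  rw [gmap_invol, gmap_invol]

lemma dualE_eq (F : PreGraph) : (cdual F).E = F.E.image (phiE F.V F.E) := by
  show F.E.image _ = F.E.image _
  apply Finset.image_congr
  intro e he
  have hc : comp F.V F.E e.1 = comp F.V F.E e.2 :=
    comp_congr (Relation.ReflTransGen.single (Or.inl he))
  show (flipMap (comp F.V F.E e.1) e.2, flipMap (comp F.V F.E e.1) e.1) =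
    (flipMap (comp F.V F.E e.2) e.2, flipMap (comp F.V F.E e.1) e.1)
  rw [hc]

lemma adj_image {V : Finset ℕ} {E : Finset PEdge} (S : Finset PEdge) (u v : ℕ) :
    adjP (S.image (phiE V E)) u v ↔ adjP S (gmap V E u) (gmap V E v) := by
  constructor
  · rintro (h | h)
    · obtain ⟨e, he, heq⟩ := Finset.mem_image.mp h
      have hu : u = gmap V E e.2 := ((Prod.ext_iff.mp heq).1).symm
      have hv : v = gmap V E e.1 := ((Prod.ext_iff.mp heq).2).symm
      subst hu; subst hv
      rw [gmap_invol, gmap_invol]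
      exact Or.inr he
    · obtain ⟨e, he, heq⟩ := Finset.mem_image.mp h
      have hv : v = gmap V E e.2 := ((Prod.ext_iff.mp heq).1).symm
      have hu : u = gmap V E e.1 := ((Prod.ext_iff.mp heq).2).symm
      subst hu; subst hv
      rw [gmap_invol, gmap_invol]
      exact Or.inl he
  · rintro (h | h)
    · refine Or.inr (Finset.mem_image.mpr ⟨(gmap V E u, gmap V E v), h, ?_⟩)
      show (gmap V E (gmap V E v), gmap V E (gmap V E u)) = (v, u)
      rw [gmap_invol, gmap_invol]
    · refine Or.inl (Finset.mem_image.mpr ⟨(gmap V E v, gmap V E u), h, ?_⟩)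
      show (gmap V E (gmap V E u), gmap V E (gmap V E v)) = (u, v)
      rw [gmap_invol, gmap_invol]

lemma reach_image_mp {V : Finset ℕ} {E : Finset PEdge} {S : Finset PEdge} {u v : ℕ}
    (h : reachP (S.image (phiE V E)) u v) : reachP S (gmap V E u) (gmap V E v) := by
  induction h with
  | refl => exact Relation.ReflTransGen.refl
  | tail _ hadj ih => exact ih.tail ((adj_image S _ _).mp hadj)

lemma image_phiE_phiE (V : Finset ℕ) (E : Finset PEdge) (S : Finset PEdge) :
    (S.image (phiE V E)).image (phiE V E) = S := by
  rw [Finset.image_image]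
  have : phiE V E ∘ phiE V E = id := funext fun e => phiE_invol V E e
  rw [this, Finset.image_id]

lemma reach_image {V : Finset ℕ} {E : Finset PEdge} (S : Finset PEdge) (u v : ℕ) :
    reachP (S.image (phiE V E)) u v ↔ reachP S (gmap V E u) (gmap V E v) := by
  refine ⟨reach_image_mp, fun h => ?_⟩
  rw [← image_phiE_phiE V E S] at h
  have := reach_image_mp h
  rwa [gmap_invol, gmap_invol] at this

end Stmt6Aux

/-- the dual of a tiered tree with two tiers is again a tree:
a tiered forest `F` is acyclic and connected iff its dual `F'` is; more generally
`F` and `F'` have the same number of connected components. -/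
theorem stmt6 (F : PreGraph) (hT : IsTiered F) (hF : IsForest F) :
    ((IsForest F ∧ connP F.V F.E) ↔ (IsForest (cdual F) ∧ connP (cdual F).V (cdual F).E)) ∧
    (F.V.image fun x => comp F.V F.E x).card =
      ((cdual F).V.image fun x => comp (cdual F).V (cdual F).E x).card := by
  obtain ⟨-, hVE, -, -⟩ := hT
  have hreach : ∀ u ∈ F.V, ∀ v ∈ F.V, (reachP (cdual F).E u v ↔ reachP F.E u v) := by
    intro u hu v hv
    rw [dualE_eq, reach_image]
    constructor
    · intro h
      exact (reach_gmap hu).trans (h.trans (reachP_symm (reach_gmap hv)))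
    · intro h
      exact (reachP_symm (reach_gmap hu)).trans (h.trans (reach_gmap hv))
  have hforest' : IsForest (cdual F) := by
    intro e' he'
    rw [dualE_eq] at he' ⊢
    obtain ⟨e, he, rfl⟩ := Finset.mem_image.mp he'
    rw [← Finset.image_erase (phiE_invol F.V F.E).injective, reach_image]
    show ¬ reachP (F.E.erase e) (gmap F.V F.E (gmap F.V F.E e.2))
      (gmap F.V F.E (gmap F.V F.E e.1))
    rw [gmap_invol, gmap_invol]
    exact fun h => hF e he (reachP_symm h)
  have hconn : connP F.V (cdual F).E ↔ connP F.V F.E := by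
    constructor
    · rintro ⟨-, h2⟩
      exact ⟨fun e he => ⟨(hVE e he).1, (hVE e he).2.1⟩,
        fun u hu v hv => (hreach u hu v hv).mp (h2 u hu v hv)⟩
    · rintro ⟨-, h2⟩
      refine ⟨?_, fun u hu v hv => (hreach u hu v hv).mpr (h2 u hu v hv)⟩
      intro e' he'
      rw [dualE_eq] at he'
      obtain ⟨e, he, rfl⟩ := Finset.mem_image.mp he'
      exact ⟨gmap_mem (hVE e he).2.1, gmap_mem (hVE e he).1⟩
  have hcomp : ∀ x ∈ F.V, comp (cdual F).V (cdual F).E x = comp F.V F.E x := by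
    intro x hx
    apply Finset.filter_congr
    intro y hy
    exact hreach x hx y hy
  refine ⟨⟨fun h => ⟨hforest', hconn.mpr h.2⟩, fun h => ⟨hF, hconn.mp h.2⟩⟩, ?_⟩
  show (F.V.image fun x => comp F.V F.E x).card =
    (F.V.image fun x => comp (cdual F).V (cdual F).E x).card
  congr 1
  apply Finset.image_congr
  intro x hx
  exact (hcomp x (Finset.mem_coe.mp hx)).symm

end
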